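/- Let σ be the algebra automorphism of the Weyl algebra (differential operators with polynomial coefficients in x) induced by x ↦ −x, ∂_x ↦ −∂_x. A differential operator with polynomial coefficients is fixed by σ and formally symmetric if and only if it has the form ∑_{j=0}^ℓ ∂_x^j a_j(x²) ∂_x^j with each a_j a polynomial in x². -/

import Mathlib

/-- Iterated polynomial derivative. -/
noncomputable def pIter (i : ℕ) (p : Polynomial ℂ) : Polynomial ℂ :=
  (fun q => Polynomial.derivative q)^[i] p

/-- The coefficient of `∂^i` in the formal adjoint of `∑_{j ≤ n} a_j ∂^j`
(with polynomial coefficients). -/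
noncomputable def adjCoeffP (n : ℕ) (a : ℕ → Polynomial ℂ) (i : ℕ) : Polynomial ℂ :=
  ∑ j ∈ Finset.range (n + 1),
    if i ≤ j then
      Polynomial.C ((-1 : ℂ) ^ j) * (j.choose (j - i) : Polynomial ℂ) * pIter (j - i) (a j)
    else 0

namespace SigmaAux

open Polynomial Finset

lemma pIter_zero_poly (i : ℕ) : pIter i 0 = 0 := by
  induction i with
  | zero => rfl
  | succ k ih =>
      rw [show k+1 = k+1 from rfl, pIter] at *
      rw [Function.iterate_succ_apply', ih]
      simp

lemma pIter_succ' (i : ℕ) (p : Polynomial ℂ) :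
    pIter (i+1) p = derivative (pIter i p) := by
  simp [pIter, Function.iterate_succ_apply']

lemma pIter_add (i : ℕ) (p q : Polynomial ℂ) : pIter i (p + q) = pIter i p + pIter i q := by
  induction i with
  | zero => rfl
  | succ k ih => simp [pIter_succ', ih]

lemma pIter_sub (i : ℕ) (p q : Polynomial ℂ) : pIter i (p - q) = pIter i p - pIter i q := by
  induction i with
  | zero => rfl
  | succ k ih => simp [pIter_succ', ih]

lemma pIter_pIter (i k : ℕ) (p : Polynomial ℂ) : pIter i (pIter k p) = pIter (i + k) p := by
  simp [pIter, Function.iterate_add_apply]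

lemma pIter_C_mul (c : ℂ) (i : ℕ) (p : Polynomial ℂ) :
    pIter i (C c * p) = C c * pIter i p := by
  induction i with
  | zero => rfl
  | succ k ih => simp [pIter_succ', ih]

lemma natCast_eq_C (n : ℕ) : (n : ℂ[X]) = C (n : ℂ) := by simp

lemma pIter_natCast_mul (c : ℕ) (i : ℕ) (p : Polynomial ℂ) :
    pIter i ((c : Polynomial ℂ) * p) = (c : Polynomial ℂ) * pIter i p := by
  rw [natCast_eq_C, pIter_C_mul]

lemma pIter_sum {s : Finset ℕ} (i : ℕ) (F : ℕ → Polynomial ℂ) :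
    pIter i (∑ j ∈ s, F j) = ∑ j ∈ s, pIter i (F j) := by
  classical
  induction s using Finset.induction with
  | empty => simp [pIter_zero_poly]
  | @insert x s h ih => simp [Finset.sum_insert h, pIter_add, ih]

lemma coeff_comp_neg_X (p : Polynomial ℂ) (m : ℕ) :
    (p.comp (-X)).coeff m = (-1 : ℂ)^m * p.coeff m := by
  induction p using Polynomial.induction_on' with
  | add p q hp hq => simp [add_comp, hp, hq]; ring
  | monomial n a =>
      rw [show ((monomial n) a).comp (-X) = C ((-1:ℂ)^n * a) * X^n by
        rw [monomial_comp, show (-X : Polynomial ℂ) = C (-1:ℂ) * X by simp,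
          mul_pow, ← C_pow, C_mul]; ring]
      simp only [coeff_C_mul, coeff_X_pow, coeff_monomial]
      by_cases h : m = n
      · subst h; simp
      · simp [h, Ne.symm h]

lemma even_comp_exists (p : Polynomial ℂ) (hp : p.comp (-X) = p) :
    ∃ q : Polynomial ℂ, p = q.comp (X^2) := by
  have hodd : ∀ m, Odd m → p.coeff m = 0 := by
    intro m hm
    have h2 := coeff_comp_neg_X p m
    rw [hp, hm.neg_one_pow] at h2
    linear_combination (1/2 : ℂ) * h2
  refine ⟨∑ k ∈ range (p.natDegree + 1), C (p.coeff (2*k)) * X^k, ?_⟩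
  rw [Polynomial.sum_comp]
  ext m
  rw [Polynomial.finset_sum_coeff]
  have hterm : ∀ k, ((C (p.coeff (2*k)) * X ^ k).comp (X^2)).coeff m
      = if m = 2*k then p.coeff (2*k) else 0 := by
    intro k
    rw [mul_comp, C_comp, pow_comp, X_comp, ← pow_mul]
    simp [coeff_C_mul, coeff_X_pow, mul_comm k 2]
  simp_rw [hterm]
  rcases Nat.even_or_odd m with he | ho
  · obtain ⟨c, hc⟩ := he
    have hcc : c + c = 2 * c := by ring
    simp_rw [hc, hcc, show ∀ x : ℕ, (2*c = 2*x) ↔ (c = x) by omega]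
    rw [Finset.sum_ite_eq]
    by_cases h : c ∈ range (p.natDegree + 1)
    · simp [h]
    · simp only [h, if_neg, if_false]
      apply coeff_eq_zero_of_natDegree_lt
      simp only [Finset.mem_range] at h
      omega
  · rw [Finset.sum_eq_zero, hodd m ho]
    intro x _
    rw [if_neg]
    rintro rfl
    exact (Nat.not_odd_iff_even.mpr ⟨x, by ring⟩) ho

lemma comp_X_sq_even (q : Polynomial ℂ) : (q.comp (X^2)).comp (-X) = q.comp (X^2) := by
  rw [Polynomial.comp_assoc]
  congr 1
  simp [Polynomial.pow_comp]

lemma pIter_parity (p : Polynomial ℂ) (hp : p.comp (-X) = p) (k : ℕ) :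
    (pIter k p).comp (-X) = C ((-1:ℂ)^k) * pIter k p := by
  induction k with
  | zero => simpa [pIter] using hp
  | succ m ih =>
      have hd := congrArg derivative ih
      rw [derivative_comp, derivative_C_mul, ← pIter_succ'] at hd
      simp only [derivative_neg, derivative_X] at hd
      have h2 : (pIter (m+1) p).comp (-X) = - (C ((-1:ℂ)^m) * pIter (m+1) p) := by
        have h3 := hd
        rw [neg_one_mul] at h3
        linear_combination -h3
      rw [h2, pow_succ]
      rw [show C ((-1:ℂ)^m * -1) = C ((-1:ℂ)^m) * C (-1:ℂ) by rw [C_mul]]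
      ring_nf
      simp [mul_comm]

lemma key_binom (j i : ℕ) (hij : i ≤ 2*j) :
    ∑ r ∈ Icc j (2*j), (-1:ℂ)^r * (r.choose i : ℂ) * (j.choose (2*j - r) : ℂ)
      = (j.choose (2*j - i) : ℂ) := by
  have hpoly : (X:ℂ[X])^j * (1+X)^j
      = ∑ m ∈ range (j+1), C ((-1:ℂ)^(m+j) * (j.choose m : ℂ)) * (1+X)^(m+j) := by
    have hx : (X:ℂ[X]) = (1+X) - 1 := by ring
    calc (X:ℂ[X])^j * (1+X)^j = ((1+X) - 1)^j * (1+X)^j := by rw [← hx]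
    _ = (∑ m ∈ range (j+1), (-1:ℂ[X])^(m+j) * (1+X)^m * 1^(j-m) * (j.choose m : ℂ[X])) * (1+X)^j := by
        rw [sub_pow]
    _ = _ := by
        rw [Finset.sum_mul]
        apply Finset.sum_congr rfl
        intro m _
        rw [show ((-1:ℂ[X]))^(m+j) = C ((-1:ℂ)^(m+j)) by simp,
          show ((j.choose m : ℂ[X])) = C ((j.choose m : ℂ)) by simp, C_mul, pow_add]
        ring
  have hco := congrArg (fun p => Polynomial.coeff p i) hpoly
  simp only [finset_sum_coeff, coeff_C_mul] at hco
  have hrhs : ∀ m, ((1+X:ℂ[X])^(m+j)).coeff i = ((m+j).choose i : ℂ) := by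
    intro m; exact_mod_cast Polynomial.coeff_one_add_X_pow ℂ (m+j) i
  simp only [hrhs] at hco
  have hlhs : ((X:ℂ[X])^j * (1+X)^j).coeff i
      = if j ≤ i then ((j.choose (i - j)) : ℂ) else 0 := by
    rw [mul_comm, Polynomial.coeff_mul_X_pow']
    by_cases h : j ≤ i
    · simp only [h, if_pos]
      exact_mod_cast Polynomial.coeff_one_add_X_pow ℂ j (i-j)
    · simp [h]
  rw [hlhs] at hco
  have hre : ∑ r ∈ Icc j (2*j), (-1:ℂ)^r * (r.choose i : ℂ) * (j.choose (2*j - r) : ℂ)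
      = ∑ m ∈ range (j+1), (-1:ℂ)^(m+j) * ((j.choose m : ℂ)) * (((m+j).choose i : ℂ)) := by
    refine Finset.sum_nbij' (fun r => r - j) (fun m => m + j) ?_ ?_ ?_ ?_ ?_
    · intro r hr; simp only [Finset.mem_Icc] at hr; simp only [Finset.mem_range]; omega
    · intro m hm; simp only [Finset.mem_range] at hm; simp only [Finset.mem_Icc]; omega
    · intro r hr; simp only [Finset.mem_Icc] at hr; omega
    · intro m _; omega
    · intro r hr
      simp only [Finset.mem_Icc] at hr
      rw [show r - j + j = r by omega, show j.choose (2*j - r) = j.choose (r - j) by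
        rw [← Nat.choose_symm (by omega : r - j ≤ j)]; congr 1; omega]
      ring
  rw [hre, ← hco]
  split_ifs with h
  · congr 1
    rw [← Nat.choose_symm (by omega : i - j ≤ j)]; congr 1; omega
  · symm
    norm_cast
    exact Nat.choose_eq_zero_of_lt (by omega)

/-- Coefficient of `∂^i` in the normal form of `∂^j f ∂^j`. -/
noncomputable def Tterm (j : ℕ) (f : Polynomial ℂ) (i : ℕ) : Polynomial ℂ :=
  if j ≤ i ∧ i ≤ 2*j then (j.choose (2*j - i) : Polynomial ℂ) * pIter (2*j - i) f else 0

lemma Tterm_zero (j i : ℕ) : Tterm j 0 i = 0 := by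
  unfold Tterm; split_ifs <;> simp [pIter_zero_poly]

lemma Tterm_add (j i : ℕ) (f g : Polynomial ℂ) :
    Tterm j (f + g) i = Tterm j f i + Tterm j g i := by
  unfold Tterm; split_ifs <;> simp [pIter_add]; ring

lemma adj_T (N j : ℕ) (hN : 2*j ≤ N) (f : Polynomial ℂ) (i : ℕ) :
    adjCoeffP N (Tterm j f) i = Tterm j f i := by
  unfold adjCoeffP
  have hstep : ∀ r ∈ range (N+1),
      (if i ≤ r then C ((-1:ℂ)^r) * (r.choose (r - i) : ℂ[X]) * pIter (r - i) (Tterm j f r) else 0)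
      = if r ∈ Icc j (2*j) then
          C ((-1:ℂ)^r * (r.choose i : ℂ) * (j.choose (2*j - r) : ℂ)) * pIter (2*j - i) f
        else 0 := by
    intro r _
    by_cases hr : r ∈ Icc j (2*j)
    · have hr2 : j ≤ r ∧ r ≤ 2*j := Finset.mem_Icc.mp hr
      by_cases hi : i ≤ r
      · rw [if_pos hi, if_pos hr]
        unfold Tterm
        rw [if_pos ⟨hr2.1, hr2.2⟩, pIter_natCast_mul, pIter_pIter,
          show r - i + (2*j - r) = 2*j - i by omega,
          show r.choose (r - i) = r.choose i from by
            rw [← Nat.choose_symm hi],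
          natCast_eq_C, natCast_eq_C, C_mul, C_mul]
        ring
      · rw [if_neg hi, if_pos hr]
        rw [show r.choose i = 0 from Nat.choose_eq_zero_of_lt (by omega)]
        simp
    · rw [if_neg hr]
      simp only [Finset.mem_Icc, not_and_or, not_le] at hr
      by_cases hi : i ≤ r
      · rw [if_pos hi]
        unfold Tterm
        rw [if_neg (by omega), pIter_zero_poly, mul_zero]
      · rw [if_neg hi]
  rw [Finset.sum_congr rfl hstep, Finset.sum_ite_mem,
    Finset.inter_eq_right.mpr (by
      intro r hr; simp only [Finset.mem_Icc] at hr; simp only [Finset.mem_range]; omega),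
    ← Finset.sum_mul, ← map_sum]
  by_cases hij : i ≤ 2*j
  · rw [key_binom j i hij]
    unfold Tterm
    by_cases hji : j ≤ i
    · rw [if_pos ⟨hji, hij⟩, natCast_eq_C]
    · rw [if_neg (by omega),
        show j.choose (2*j - i) = 0 from Nat.choose_eq_zero_of_lt (by omega)]
      simp
  · rw [show (∑ r ∈ Icc j (2*j), (-1:ℂ)^r * (r.choose i : ℂ) * (j.choose (2*j - r) : ℂ)) = 0
      from Finset.sum_eq_zero (by
        intro r hr; simp only [Finset.mem_Icc] at hr
        rw [show r.choose i = 0 from Nat.choose_eq_zero_of_lt (by omega)]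
        simp)]
    unfold Tterm
    rw [if_neg (by omega)]
    simp

lemma adjCoeffP_congr (n N : ℕ) (hnN : n ≤ N) (a : ℕ → Polynomial ℂ)
    (ha : ∀ j, n < j → a j = 0) (i : ℕ) :
    adjCoeffP N a i = adjCoeffP n a i := by
  unfold adjCoeffP
  refine (Finset.sum_subset (Finset.range_subset_range.mpr (by omega)) ?_).symm
  intro r hr hnr
  simp only [Finset.mem_range] at hr hnr
  rw [ha r (by omega), pIter_zero_poly]
  split_ifs <;> simp

lemma adjCoeffP_sub (N : ℕ) (a t : ℕ → Polynomial ℂ) (i : ℕ) :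
    adjCoeffP N (fun r => a r - t r) i = adjCoeffP N a i - adjCoeffP N t i := by
  unfold adjCoeffP
  rw [← Finset.sum_sub_distrib]
  apply Finset.sum_congr rfl
  intro r _
  split_ifs <;> simp [pIter_sub]; ring

lemma adjCoeffP_sum (N : ℕ) (s : Finset ℕ) (F : ℕ → ℕ → Polynomial ℂ) (i : ℕ) :
    adjCoeffP N (fun r => ∑ j ∈ s, F j r) i = ∑ j ∈ s, adjCoeffP N (F j) i := by
  unfold adjCoeffP
  rw [Finset.sum_comm]
  apply Finset.sum_congr rfl
  intro r _
  split_ifs with h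
  · rw [pIter_sum, Finset.mul_sum]
  · rw [Finset.sum_const_zero]

lemma Tterm_parity (j : ℕ) (q : Polynomial ℂ) (i : ℕ) :
    C ((-1:ℂ)^i) * (Tterm j (q.comp (X^2)) i).comp (-X) = Tterm j (q.comp (X^2)) i := by
  unfold Tterm
  split_ifs with h
  · rw [natCast_eq_C, C_mul_comp, pIter_parity _ (comp_X_sq_even q)]
    have h1 : (-1:ℂ)^i * (-1:ℂ)^(2*j - i) = 1 := by
      rw [← pow_add, show i + (2*j - i) = 2*j by omega, pow_mul]
      norm_num
    calc C ((-1:ℂ)^i) * (C ((j.choose (2*j-i) : ℕ) : ℂ) * (C ((-1:ℂ)^(2*j-i)) * pIter (2*j-i) (q.comp (X^2))))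
        = C ((-1:ℂ)^i * (-1:ℂ)^(2*j-i)) * (C ((j.choose (2*j-i) : ℕ) : ℂ) * pIter (2*j-i) (q.comp (X^2))) := by
          rw [C_mul]; ring
      _ = _ := by rw [h1]; simp
  · simp

lemma forward_key (m : ℕ) : ∀ a : ℕ → Polynomial ℂ,
    (∀ j, m < j → a j = 0) →
    (∀ j, C ((-1:ℂ)^j) * (a j).comp (-X) = a j) →
    (∀ i, adjCoeffP m a i = a i) →
    ∃ b : ℕ → Polynomial ℂ, ∀ i,
      a i = ∑ j ∈ range (m+1), Tterm j ((b j).comp (X^2)) i := by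
  induction m using Nat.strong_induction_on with
  | _ m IH =>
    intro a ha hσ hsym
    match m, IH with
    | 0, _ =>
        obtain ⟨q, hq⟩ := even_comp_exists (a 0) (by simpa using hσ 0)
        refine ⟨fun _ => q, fun i => ?_⟩
        rw [Finset.sum_range_one]
        unfold Tterm
        by_cases h : i = 0
        · subst h
          rw [if_pos ⟨le_refl 0, by omega⟩]
          simp [pIter, ← hq]
        · rw [if_neg (by omega), ha i (by omega)]
    | (k+1), IH =>
      by_cases hm : a (k+1) = 0
      · have hsupp : ∀ j, k < j → a j = 0 := by
          intro j hj
          by_cases h : j = k+1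
          · subst h; exact hm
          · exact ha j (by omega)
        obtain ⟨b, hb⟩ := IH k (by omega) a hsupp hσ
          (fun i => by
            rw [← adjCoeffP_congr k (k+1) (by omega) a hsupp i]
            exact hsym i)
        refine ⟨fun j => if j ≤ k then b j else 0, fun i => ?_⟩
        rw [Finset.sum_range_succ]
        simp only [if_neg (show ¬ (k+1 ≤ k) by omega)]
        rw [zero_comp, Tterm_zero, add_zero, hb i]
        apply Finset.sum_congr rfl
        intro j hj
        simp only [Finset.mem_range] at hj
        simp only [if_pos (show j ≤ k by omega)]
      · -- top coefficient nonzero: order is even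
        have htop : adjCoeffP (k+1) a (k+1) = C ((-1:ℂ)^(k+1)) * a (k+1) := by
          unfold adjCoeffP
          rw [Finset.sum_eq_single (k+1)]
          · rw [if_pos (le_refl _)]
            simp [pIter]
          · intro r hr hne
            simp only [Finset.mem_range] at hr
            rw [if_neg (by omega)]
          · intro h; exact absurd (Finset.self_mem_range_succ (k+1)) h
        have heven : Even (k+1) := by
          by_contra hodd
          have hneg : ((-1:ℂ))^(k+1) = -1 := Odd.neg_one_pow (Nat.not_even_iff_odd.mp hodd)
          have h2 := hsym (k+1)
          rw [htop, hneg] at h2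
          apply hm
          have h3 : (2 : ℂ[X]) * a (k+1) = 0 := by
            have hC : (C (-1 : ℂ)) = (-1 : ℂ[X]) := by simp
            rw [hC] at h2
            linear_combination -h2
          rcases mul_eq_zero.mp h3 with h4 | h4
          · exact absurd h4 (by norm_num)
          · exact h4
        obtain ⟨ℓ, hℓ⟩ := heven
        have h2l : 2*ℓ = k+1 := by omega
        obtain ⟨q, hq⟩ := even_comp_exists (a (k+1)) (by
          have h5 := hσ (k+1)
          rwa [show ((-1:ℂ))^(k+1) = 1 by rw [← h2l, pow_mul]; norm_num, map_one, one_mul] at h5)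
        set f := q.comp (X^2) with hf
        set a' := fun r => a r - Tterm ℓ f r with ha'
        have hTtop : Tterm ℓ f (k+1) = f := by
          unfold Tterm
          rw [if_pos ⟨by omega, by omega⟩, show 2*ℓ - (k+1) = 0 by omega]
          simp [pIter]
        have ha'supp : ∀ j, k < j → a' j = 0 := by
          intro j hj
          simp only [ha']
          by_cases h : j = k+1
          · subst h; rw [hTtop, hq, sub_self]
          · rw [ha j (by omega)]
            unfold Tterm
            rw [if_neg (by omega), sub_self]
        have ha'σ : ∀ j, C ((-1:ℂ)^j) * (a' j).comp (-X) = a' j := by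
          intro j
          simp only [ha', sub_comp, mul_sub]
          rw [hσ j, hf, Tterm_parity ℓ q j]
        have ha'sym : ∀ i, adjCoeffP k a' i = a' i := by
          intro i
          rw [← adjCoeffP_congr k (k+1) (by omega) a' ha'supp i]
          simp only [ha']
          rw [adjCoeffP_sub, hsym i, adj_T (k+1) ℓ (by omega) f i]
        obtain ⟨b', hb'⟩ := IH k (by omega) a' ha'supp ha'σ ha'sym
        refine ⟨fun j => (if j = ℓ then q else 0) + (if j ≤ k then b' j else 0), fun i => ?_⟩
        have hsplit : ∀ j, (((if j = ℓ then q else 0) + (if j ≤ k then b' j else 0)).comp (X^2))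
            = (if j = ℓ then f else 0) + (if j ≤ k then (b' j).comp (X^2) else 0) := by
          intro j
          rw [add_comp]
          congr 1 <;> split_ifs <;> simp [hf]
        have hmain : a i = Tterm ℓ f i + a' i := by
          simp only [ha']
          ring
        rw [hmain]
        have hS : ∀ j, Tterm j ((((if j = ℓ then q else 0) + (if j ≤ k then b' j else 0))).comp (X^2)) i
            = Tterm j (if j = ℓ then f else 0) i + Tterm j (if j ≤ k then (b' j).comp (X^2) else 0) i := by
          intro j
          rw [hsplit j, Tterm_add]
        rw [Finset.sum_congr rfl (fun j _ => hS j), Finset.sum_add_distrib]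
        congr 1
        · rw [Finset.sum_eq_single ℓ]
          · rw [if_pos rfl]
          · intro j hj hne
            rw [if_neg hne, Tterm_zero]
          · intro h
            exact absurd (Finset.mem_range.mpr (by omega)) h
        · rw [Finset.sum_range_succ, if_neg (show ¬ (k+1 ≤ k) by omega), Tterm_zero, add_zero,
            hb' i]
          apply Finset.sum_congr rfl
          intro j hj
          simp only [Finset.mem_range] at hj
          rw [if_pos (by omega)]

end SigmaAux

/-- A differential operator `∑_{j ≤ n} a_j(x) ∂^j` with polynomial coefficients is fixed
by the automorphism `σ` of the Weyl algebra induced by `x ↦ −x`, `∂ ↦ −∂` (i.e.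
`(-1)^j a_j(−x) = a_j(x)` for all `j`), and formally symmetric, if and only if it has
the form `∑_{j ≤ ℓ} ∂^j b_j(x²) ∂^j` with each `b_j(x²)` a polynomial in `x²`. -/
theorem sigma_fixed_symmetric_iff (n : ℕ) (a : ℕ → Polynomial ℂ)
    (ha : ∀ j, n < j → a j = 0) :
    ((∀ j, Polynomial.C ((-1 : ℂ) ^ j) * (a j).comp (-Polynomial.X) = a j) ∧
        ∀ i, adjCoeffP n a i = a i) ↔
      ∃ (ℓ : ℕ) (b : ℕ → Polynomial ℂ), ∀ i,
        a i = ∑ j ∈ Finset.range (ℓ + 1),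
          if j ≤ i ∧ i ≤ 2 * j then
            (j.choose (2 * j - i) : Polynomial ℂ) *
              pIter (2 * j - i) ((b j).comp (Polynomial.X ^ 2))
          else 0 := by
  classical
  open Polynomial Finset SigmaAux in
  constructor
  · rintro ⟨hσ, hsym⟩
    obtain ⟨b, hb⟩ := SigmaAux.forward_key n a ha hσ hsym
    refine ⟨n, b, fun i => ?_⟩
    simpa only [SigmaAux.Tterm] using hb i
  · rintro ⟨ℓ, b, hb⟩
    have hb' : ∀ i, a i = ∑ j ∈ Finset.range (ℓ+1),
        SigmaAux.Tterm j ((b j).comp (X^2)) i := by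
      intro i
      simpa only [SigmaAux.Tterm] using hb i
    constructor
    · intro j
      rw [hb' j, Polynomial.sum_comp, Finset.mul_sum]
      exact Finset.sum_congr rfl (fun r _ => SigmaAux.Tterm_parity r (b r) j)
    · intro i
      set N := max n (2*ℓ) with hN
      rw [show adjCoeffP n a i = adjCoeffP N a i from
        (SigmaAux.adjCoeffP_congr n N (le_max_left _ _) a ha i).symm]
      have h1 : adjCoeffP N a i
          = ∑ j ∈ Finset.range (ℓ+1), adjCoeffP N (SigmaAux.Tterm j ((b j).comp (X^2))) i := by
        rw [show a = fun r => ∑ j ∈ Finset.range (ℓ+1), SigmaAux.Tterm j ((b j).comp (X^2)) r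
          from funext hb']
        exact SigmaAux.adjCoeffP_sum N _ _ i
      rw [h1, Finset.sum_congr rfl (fun j hj => SigmaAux.adj_T N j (by
        simp only [Finset.mem_range] at hj
        have : 2*j ≤ 2*ℓ := by omega
        exact le_trans this (le_max_right _ _)) ((b j).comp (X^2)) i)]
      exact (hb' i).symm
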